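/- Let $0<\alpha<1$, $\beta$ real with $\alpha+\beta-1>0$, $\nu\geq 2$, and $c>0$. Define $\psi(r)=\int_1^\infty t^{-\beta}\exp(-c r^{\nu/(\nu-1)}/t^{1/(\nu-1)})(t-1)^{-\alpha}\,dt$ for $r\geq 0$. Then there exists a constant $C>0$ such that $\psi(r)\leq C (1+r)^{-\nu(\alpha+\beta-1)}$ for all $r\geq 0$. -/

import Mathlib

open MeasureTheory Real Set

lemma aux_exp_bound (p : ℝ) : ∃ D : ℝ, 1 ≤ D ∧ ∀ x : ℝ, 1 ≤ x → Real.exp (-x) ≤ D * x ^ (-p) := by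
  set N : ℕ := ⌈p⌉₊ with hN
  refine ⟨(Nat.factorial N : ℝ), by exact_mod_cast Nat.one_le_iff_ne_zero.2 (Nat.factorial_ne_zero N), fun x hx => ?_⟩
  have hx0 : (0:ℝ) < x := lt_of_lt_of_le one_pos hx
  have h1 : x ^ N / Nat.factorial N ≤ Real.exp x := by
    refine le_trans ?_ (Real.sum_le_exp_of_nonneg hx0.le (N + 1))
    refine Finset.single_le_sum (f := fun i => x ^ i / Nat.factorial i) (fun i _ => by positivity) ?_
    simp
  have hxN : (0:ℝ) < x ^ N := pow_pos hx0 N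
  have h2 : Real.exp (-x) ≤ (Nat.factorial N : ℝ) / x ^ N := by
    rw [Real.exp_neg]
    have := inv_anti₀ (by positivity) h1
    rwa [inv_div] at this
  refine h2.trans ?_
  rw [div_eq_mul_inv]
  gcongr
  have : (x ^ N)⁻¹ = x ^ (-(N:ℝ)) := by
    rw [Real.rpow_neg hx0.le, Real.rpow_natCast]
  rw [this]
  exact Real.rpow_le_rpow_of_exponent_le hx (by simpa using Nat.le_ceil p)

set_option maxHeartbeats 2000000 in
theorem psi_bound (α β ν c : ℝ) (hα0 : 0 < α) (hα1 : α < 1)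
    (hαβ : α + β - 1 > 0) (hν : 2 ≤ ν) (hc : 0 < c) :
    ∃ C > 0, ∀ r : ℝ, 0 ≤ r →
      (∫ t in Ioi (1:ℝ),
          t ^ (-β) * Real.exp (-c * r ^ (ν / (ν - 1)) / t ^ (1 / (ν - 1))) *
            (t - 1) ^ (-α))
        ≤ C * (1 + r) ^ (-(ν * (α + β - 1))) := by
  set m : ℝ := ν - 1 with hmdef
  have hm1 : (1:ℝ) ≤ m := by simp only [hmdef]; linarith
  have hm0 : (0:ℝ) < m := by linarith
  set γ : ℝ := α + β with hγdef
  have hγ1 : (1:ℝ) < γ := by simp only [hγdef]; linarith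
  set k : ℝ := m * (γ - 1) with hkdef
  have hk0 : (0:ℝ) < k := mul_pos hm0 (by linarith)
  set κ : ℝ := ν * (γ - 1) with hκdef
  have hκ0 : (0:ℝ) < κ := mul_pos (by linarith) (by linarith)
  have hνm : ν = m + 1 := by simp only [hmdef]; ring
  obtain ⟨D, hD1, hDle⟩ := aux_exp_bound k
  obtain ⟨E, hE1, hEle⟩ := aux_exp_bound (k + m)
  -- the dominating function
  set g : ℝ → ℝ := fun t => t ^ (-β) * (t - 1) ^ (-α) with hgdef
  have hg_nonneg : ∀ t ∈ Ioi (1:ℝ), 0 ≤ g t := by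
    intro t ht
    have ht1 : (1:ℝ) < t := ht
    have h0 : (0:ℝ) < t := by linarith
    have h2 : (0:ℝ) < t - 1 := by linarith
    exact mul_nonneg (Real.rpow_nonneg h0.le _) (Real.rpow_nonneg h2.le _)
  -- integrability of g on (1,2]
  have hg_meas : Measurable g := by
    rw [hgdef]; fun_prop
  have hgInt12 : IntegrableOn g (Ioc (1:ℝ) 2) := by
    have h1 : IntervalIntegrable (fun t : ℝ => (t - 1) ^ (-α)) volume 1 2 := by
      have h0 : IntervalIntegrable (fun s : ℝ => s ^ (-α)) volume 0 1 :=
        intervalIntegral.intervalIntegrable_rpow' (by linarith)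
      have := h0.comp_sub_right 1
      norm_num at this
      exact this
    have h2 : IntegrableOn (fun t : ℝ => (t - 1) ^ (-α)) (Ioc (1:ℝ) 2) :=
      (intervalIntegrable_iff_integrableOn_Ioc_of_le (by norm_num)).1 h1
    refine Integrable.mono' (h2.const_mul (max 1 (2 ^ (-β)))) hg_meas.aestronglyMeasurable ?_
    rw [ae_restrict_iff' measurableSet_Ioc]
    filter_upwards with t ht
    obtain ⟨ht1, ht2⟩ := ht
    have ht0 : (0:ℝ) < t := by linarith
    have htsub : (0:ℝ) < t - 1 := by linarith
    rw [Real.norm_eq_abs, abs_of_nonneg (hg_nonneg t (mem_Ioi.2 ht1))]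
    have hb : t ^ (-β) ≤ max 1 (2 ^ (-β)) := by
      rcases le_or_gt 0 β with hβ | hβ
      · exact le_trans (Real.rpow_le_one_of_one_le_of_nonpos ht1.le (by linarith))
          (le_max_left _ _)
      · exact le_trans (Real.rpow_le_rpow ht0.le ht2 (by linarith)) (le_max_right _ _)
    exact mul_le_mul_of_nonneg_right hb (Real.rpow_nonneg htsub.le _)
  -- g is bounded by power on (2,∞)
  have hg_le : ∀ t : ℝ, 2 ≤ t → g t ≤ 2 ^ α * t ^ (-γ) := by
    intro t ht2
    have ht0 : (0:ℝ) < t := by linarith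
    have hhalf : (0:ℝ) < t / 2 := by linarith
    have hsub : t / 2 ≤ t - 1 := by linarith
    have h1 : (t - 1) ^ (-α) ≤ (t / 2) ^ (-α) :=
      Real.rpow_le_rpow_of_nonpos hhalf hsub (by linarith)
    have h2 : (t / 2) ^ (-α) = 2 ^ α * t ^ (-α) := by
      rw [Real.div_rpow ht0.le (by norm_num), Real.rpow_neg (by norm_num : (0:ℝ) ≤ 2)]
      have h2α : (0:ℝ) < (2:ℝ) ^ α := Real.rpow_pos_of_pos two_pos α
      field_simp
    have h3 : t ^ (-β) * (2 ^ α * t ^ (-α)) = 2 ^ α * t ^ (-γ) := by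
      rw [show -γ = -β + -α by rw [hγdef]; ring, Real.rpow_add ht0]
      ring
    calc g t ≤ t ^ (-β) * (t / 2) ^ (-α) :=
          mul_le_mul_of_nonneg_left h1 (Real.rpow_nonneg ht0.le _)
      _ = t ^ (-β) * (2 ^ α * t ^ (-α)) := by rw [h2]
      _ = 2 ^ α * t ^ (-γ) := h3
  have hgInt2 : IntegrableOn g (Ioi (2:ℝ)) := by
    refine Integrable.mono'
      ((integrableOn_Ioi_rpow_of_lt (by linarith : -γ < -1) (by norm_num : (0:ℝ) < 2)).const_mul
        (2 ^ α)) hg_meas.aestronglyMeasurable ?_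
    rw [ae_restrict_iff' measurableSet_Ioi]
    filter_upwards with t ht
    have ht2 : (2:ℝ) < t := ht
    rw [Real.norm_eq_abs, abs_of_nonneg (hg_nonneg t (mem_Ioi.2 (by linarith)))]
    exact hg_le t ht2.le
  have hgInt : IntegrableOn g (Ioi (1:ℝ)) := by
    rw [← Ioc_union_Ioi_eq_Ioi (by norm_num : (1:ℝ) ≤ 2)]
    exact hgInt12.union hgInt2
  set M₁ : ℝ := ∫ t in Ioc (1:ℝ) 2, g t with hM₁def
  set M : ℝ := ∫ t in Ioi (1:ℝ), g t with hMdef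
  have hM₁0 : 0 ≤ M₁ :=
    setIntegral_nonneg measurableSet_Ioc (fun t ht => hg_nonneg t (mem_Ioi.2 ht.1))
  have hM0 : 0 ≤ M := setIntegral_nonneg measurableSet_Ioi (fun t ht => hg_nonneg t ht)
  -- properties of the integrand
  set r₀ : ℝ := 1 + 2 / c with hr₀def
  have hr₀1 : (1:ℝ) ≤ r₀ := by
    have : 0 < 2 / c := by positivity
    simp only [hr₀def]; linarith
  set Cl : ℝ := (D * 2 ^ (k / m) * M₁ + 2 ^ α * E + 2 ^ α / (γ - 1)) * c ^ (-k) * 2 ^ κ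
    with hCldef
  set Cs : ℝ := (M + 1) * (1 + r₀) ^ κ with hCsdef
  have hCl0 : 0 < Cl := by
    have h1 : (0:ℝ) < 2 ^ α * E := by positivity
    have h2 : (0:ℝ) < 2 ^ α / (γ - 1) := by positivity
    have h3 : (0:ℝ) ≤ D * 2 ^ (k / m) * M₁ := by positivity
    have h4 : (0:ℝ) < c ^ (-k) := by positivity
    have h5 : (0:ℝ) < (2:ℝ) ^ κ := by positivity
    positivity
  have hCs0 : 0 < Cs := by positivity
  refine ⟨Cl + Cs, by linarith, fun r hr => ?_⟩
  -- the integrand and its basic properties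
  set F : ℝ → ℝ := fun t =>
    t ^ (-β) * Real.exp (-c * r ^ (ν / m) / t ^ (1 / m)) * (t - 1) ^ (-α) with hFdef
  have hF_nonneg : ∀ t ∈ Ioi (1:ℝ), 0 ≤ F t := by
    intro t ht
    have ht1 : (1:ℝ) < t := ht
    have ht0 : (0:ℝ) < t := by linarith
    have h2 : (0:ℝ) < t - 1 := by linarith
    exact mul_nonneg (mul_nonneg (Real.rpow_nonneg ht0.le _) (Real.exp_pos _).le)
      (Real.rpow_nonneg h2.le _)
  have hF_le_g : ∀ t ∈ Ioi (1:ℝ), F t ≤ g t := by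
    intro t ht
    have ht1 : (1:ℝ) < t := ht
    have ht0 : (0:ℝ) < t := by linarith
    have hexp : Real.exp (-c * r ^ (ν / m) / t ^ (1 / m)) ≤ 1 := by
      apply Real.exp_le_one_iff.2
      apply div_nonpos_of_nonpos_of_nonneg
      · have : 0 ≤ c * r ^ (ν / m) := by positivity
        linarith
      · positivity
    have h1 : (0:ℝ) ≤ t ^ (-β) := by positivity
    have h2 : (0:ℝ) ≤ (t - 1) ^ (-α) := by
      have : (0:ℝ) < t - 1 := by linarith
      positivity
    calc t ^ (-β) * Real.exp (-c * r ^ (ν / m) / t ^ (1 / m)) * (t - 1) ^ (-α)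
        ≤ t ^ (-β) * 1 * (t - 1) ^ (-α) := by
          apply mul_le_mul_of_nonneg_right _ h2
          exact mul_le_mul_of_nonneg_left hexp h1
      _ = g t := by rw [hgdef]; ring
  have hF_meas : AEStronglyMeasurable F (volume.restrict (Ioi (1:ℝ))) := by
    apply Measurable.aestronglyMeasurable
    rw [hFdef]; fun_prop
  have hFInt : IntegrableOn F (Ioi (1:ℝ)) := by
    refine Integrable.mono' hgInt hF_meas ?_
    rw [ae_restrict_iff' measurableSet_Ioi]
    filter_upwards with t ht
    rw [Real.norm_eq_abs, abs_of_nonneg (hF_nonneg t ht)]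
    exact hF_le_g t ht
  -- final inequality for (1+r)
  have h1r : (0:ℝ) < 1 + r := by linarith
  rcases le_total r r₀ with hcase | hcase
  · -- small r
    have hψ : (∫ t in Ioi (1:ℝ), F t) ≤ M :=
      setIntegral_mono_on hFInt hgInt measurableSet_Ioi hF_le_g
    have hmono : (1 + r₀) ^ (-κ) ≤ (1 + r) ^ (-κ) :=
      Real.rpow_le_rpow_of_nonpos h1r (by linarith) (by linarith)
    have hMle : M ≤ Cs * (1 + r) ^ (-κ) := by
      have hid : (1 + r₀) ^ κ * (1 + r₀) ^ (-κ) = 1 := by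
        rw [← Real.rpow_add (by linarith)]
        simp
      calc M ≤ (M + 1) * ((1 + r₀) ^ κ * (1 + r₀) ^ (-κ)) := by rw [hid]; linarith
        _ = Cs * (1 + r₀) ^ (-κ) := by rw [hCsdef]; ring
        _ ≤ Cs * (1 + r) ^ (-κ) := by
            apply mul_le_mul_of_nonneg_left hmono hCs0.le
    have : (0:ℝ) ≤ Cl * (1 + r) ^ (-κ) := by positivity
    calc (∫ t in Ioi (1:ℝ), F t) ≤ M := hψ
      _ ≤ Cs * (1 + r) ^ (-κ) := hMle
      _ ≤ (Cl + Cs) * (1 + r) ^ (-κ) := by nlinarith [Real.rpow_pos_of_pos h1r (-κ)]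
  · -- large r
    have hr1 : (1:ℝ) ≤ r := le_trans hr₀1 hcase
    have hr0 : (0:ℝ) < r := by linarith
    have hem : (1:ℝ) ≤ ν / m := by
      rw [le_div_iff₀ hm0]; linarith
    have hre : r ≤ r ^ (ν / m) := by
      nth_rewrite 1 [← Real.rpow_one r]
      exact Real.rpow_le_rpow_of_exponent_le hr1 hem
    have hrpow0 : (0:ℝ) < r ^ (ν / m) := Real.rpow_pos_of_pos hr0 _
    set a : ℝ := c * r ^ (ν / m) with hadef
    have ha2 : (2:ℝ) ≤ a := by
      have h1 : 2 / c ≤ r := by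
        have h2 := hcase
        rw [hr₀def] at h2
        linarith
      have h3 : c * (2 / c) ≤ c * r := mul_le_mul_of_nonneg_left h1 hc.le
      have h4 : c * (2 / c) = 2 := by field_simp
      have h5 : c * r ≤ c * r ^ (ν / m) := mul_le_mul_of_nonneg_left hre hc.le
      rw [hadef]
      linarith
    have ha0 : (0:ℝ) < a := by linarith
    set T : ℝ := a ^ m with hTdef
    have hT2 : (2:ℝ) ≤ T := by
      calc (2:ℝ) = 2 ^ (1:ℝ) := (Real.rpow_one 2).symm
        _ ≤ 2 ^ m := Real.rpow_le_rpow_of_exponent_le one_le_two hm1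
        _ ≤ a ^ m := Real.rpow_le_rpow (by norm_num) ha2 hm0.le
    have hT0 : (0:ℝ) < T := by linarith
    have hTpow : T ^ (1/m) = a := by
      rw [hTdef, ← Real.rpow_mul ha0.le, mul_one_div, div_self hm0.ne', Real.rpow_one]
    have harg : ∀ t : ℝ, -c * r ^ (ν / m) / t ^ (1/m) = -(a / t ^ (1/m)) := by
      intro t; rw [hadef]; ring
    -- integrability on the pieces
    have hFInt12 : IntegrableOn F (Ioc (1:ℝ) 2) := hFInt.mono_set Ioc_subset_Ioi_self
    have hFInt2 : IntegrableOn F (Ioi (2:ℝ)) := hFInt.mono_set (Ioi_subset_Ioi one_le_two)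
    have hFInt2T : IntegrableOn F (Ioc (2:ℝ) T) := hFInt2.mono_set Ioc_subset_Ioi_self
    have hFIntT : IntegrableOn F (Ioi T) := hFInt2.mono_set (Ioi_subset_Ioi hT2)
    have hsplit1 : (∫ t in Ioi (1:ℝ), F t)
        = (∫ t in Ioc (1:ℝ) 2, F t) + ∫ t in Ioi (2:ℝ), F t := by
      rw [← setIntegral_union (Ioc_disjoint_Ioi le_rfl) measurableSet_Ioi hFInt12 hFInt2,
        Ioc_union_Ioi_eq_Ioi one_le_two]
    have hsplit2 : (∫ t in Ioi (2:ℝ), F t)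
        = (∫ t in Ioc (2:ℝ) T, F t) + ∫ t in Ioi T, F t := by
      rw [← setIntegral_union (Ioc_disjoint_Ioi le_rfl) measurableSet_Ioi hFInt2T hFIntT,
        Ioc_union_Ioi_eq_Ioi hT2]
    -- near piece
    have hnear : (∫ t in Ioc (1:ℝ) 2, F t) ≤ D * 2 ^ (k/m) * M₁ * a ^ (-k) := by
      have hstep : ∀ t ∈ Ioc (1:ℝ) 2, F t ≤ Real.exp (-(a * 2 ^ (-(1/m)))) * g t := by
        intro t ht
        obtain ⟨ht1, ht2⟩ := ht
        have ht0 : (0:ℝ) < t := by linarith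
        have htm : t ^ ((1:ℝ)/m) ≤ 2 ^ ((1:ℝ)/m) :=
          Real.rpow_le_rpow ht0.le ht2 (by positivity)
        have htm0 : (0:ℝ) < t ^ ((1:ℝ)/m) := Real.rpow_pos_of_pos ht0 _
        have hargle : a * 2 ^ (-(1/m)) ≤ a / t ^ ((1:ℝ)/m) := by
          rw [Real.rpow_neg (by norm_num : (0:ℝ) ≤ 2), ← div_eq_mul_inv]
          exact div_le_div_of_nonneg_left ha0.le htm0 htm
        have hexp : Real.exp (-c * r ^ (ν/m) / t ^ (1/m))
            ≤ Real.exp (-(a * 2 ^ (-(1/m)))) := by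
          rw [Real.exp_le_exp, harg t]
          linarith
        calc F t ≤ t ^ (-β) * Real.exp (-(a * 2 ^ (-(1/m)))) * (t-1) ^ (-α) := by
              have h1 : (0:ℝ) ≤ t ^ (-β) := Real.rpow_nonneg ht0.le _
              have h2 : (0:ℝ) ≤ (t-1) ^ (-α) := Real.rpow_nonneg (by linarith) _
              exact mul_le_mul_of_nonneg_right (mul_le_mul_of_nonneg_left hexp h1) h2
          _ = Real.exp (-(a * 2 ^ (-(1/m)))) * g t := by rw [hgdef]; ring
      have hint : (∫ t in Ioc (1:ℝ) 2, F t) ≤ Real.exp (-(a * 2 ^ (-(1/m)))) * M₁ := by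
        rw [hM₁def, ← integral_const_mul]
        exact setIntegral_mono_on hFInt12 (hgInt12.const_mul _) measurableSet_Ioc hstep
      refine hint.trans ?_
      have hx1 : (1:ℝ) ≤ a * 2 ^ (-(1/m)) := by
        have h1 : (2:ℝ) ^ (-(1:ℝ)) ≤ 2 ^ (-(1/m)) :=
          Real.rpow_le_rpow_of_exponent_le one_le_two
            (by rw [neg_le_neg_iff, div_le_one hm0]; linarith)
        have h2 : (2:ℝ) ^ (-(1:ℝ)) = 1/2 := by
          rw [Real.rpow_neg_one]; norm_num
        nlinarith
      have hDexp := hDle _ hx1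
      have hpow : (a * 2 ^ (-(1/m))) ^ (-k) = a ^ (-k) * 2 ^ (k/m) := by
        rw [Real.mul_rpow ha0.le (Real.rpow_nonneg (by norm_num) _)]
        congr 1
        rw [← Real.rpow_mul (by norm_num : (0:ℝ) ≤ 2)]
        congr 1
        field_simp
      calc Real.exp (-(a * 2 ^ (-(1/m)))) * M₁
          ≤ (D * (a * 2 ^ (-(1/m))) ^ (-k)) * M₁ := mul_le_mul_of_nonneg_right hDexp hM₁0
        _ = D * 2 ^ (k/m) * M₁ * a ^ (-k) := by rw [hpow]; ring
    -- middle piece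
    have hmid : (∫ t in Ioc (2:ℝ) T, F t) ≤ 2 ^ α * E * a ^ (-k) := by
      have hstep : ∀ t ∈ Ioc (2:ℝ) T, F t ≤ 2 ^ α * E * a ^ (-(k+m)) := by
        intro t ht
        obtain ⟨ht2, htT⟩ := ht
        have ht0 : (0:ℝ) < t := by linarith
        have htm0 : (0:ℝ) < t ^ ((1:ℝ)/m) := Real.rpow_pos_of_pos ht0 _
        have htma : t ^ ((1:ℝ)/m) ≤ a := by
          rw [← hTpow]
          exact Real.rpow_le_rpow ht0.le htT (by positivity)
        have hx1 : (1:ℝ) ≤ a / t ^ ((1:ℝ)/m) := (one_le_div htm0).2 htma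
        have hEexp := hEle _ hx1
        have htγ0 : (0:ℝ) < t ^ (-γ) := Real.rpow_pos_of_pos ht0 _
        have hqpow : (a / t ^ ((1:ℝ)/m)) ^ (-(k+m)) = a ^ (-(k+m)) / t ^ (-γ) := by
          rw [Real.div_rpow ha0.le htm0.le]
          congr 1
          rw [← Real.rpow_mul ht0.le]
          congr 1
          rw [hkdef]
          field_simp
          ring
        have hFg : F t = g t * Real.exp (-(a / t ^ (1/m))) := by
          simp only [hFdef, hgdef]
          rw [harg t]; ring
        calc F t = g t * Real.exp (-(a / t ^ (1/m))) := hFg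
          _ ≤ (2 ^ α * t ^ (-γ)) * (E * (a / t ^ ((1:ℝ)/m)) ^ (-(k+m))) := by
              apply mul_le_mul (hg_le t ht2.le) hEexp (Real.exp_pos _).le
              positivity
          _ = 2 ^ α * E * a ^ (-(k+m)) * (t ^ (-γ) / t ^ (-γ)) := by
              rw [hqpow]; ring
          _ = 2 ^ α * E * a ^ (-(k+m)) := by rw [div_self htγ0.ne']; ring
      have hconst0 : (0:ℝ) ≤ 2 ^ α * E * a ^ (-(k+m)) := by positivity
      have hint : (∫ t in Ioc (2:ℝ) T, F t) ≤ (2 ^ α * E * a ^ (-(k+m))) * (T - 2) := by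
        have hci : IntegrableOn (fun _ : ℝ => 2 ^ α * E * a ^ (-(k+m))) (Ioc (2:ℝ) T) := by
          refine integrableOn_const ?_ enorm_ne_top
          rw [Real.volume_Ioc]
          exact ENNReal.ofReal_ne_top
        have := setIntegral_mono_on hFInt2T hci measurableSet_Ioc hstep
        rwa [setIntegral_const, measureReal_def, Real.volume_Ioc, ENNReal.toReal_ofReal (by linarith),
          smul_eq_mul, mul_comm] at this
      refine hint.trans ?_
      have : (2 ^ α * E * a ^ (-(k+m))) * (T - 2) ≤ (2 ^ α * E * a ^ (-(k+m))) * T := by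
        apply mul_le_mul_of_nonneg_left _ hconst0
        linarith
      refine this.trans (le_of_eq ?_)
      rw [hTdef, mul_assoc, ← Real.rpow_add ha0]
      congr 2
      ring
    -- tail piece
    have htail : (∫ t in Ioi T, F t) ≤ 2 ^ α / (γ - 1) * a ^ (-k) := by
      have hstep : ∀ t ∈ Ioi T, F t ≤ 2 ^ α * t ^ (-γ) := by
        intro t ht
        have htT : T < t := ht
        exact (hF_le_g t (by simp only [mem_Ioi]; linarith)).trans (hg_le t (by linarith))
      have hint2 : IntegrableOn (fun t : ℝ => 2 ^ α * t ^ (-γ)) (Ioi T) :=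
        ((integrableOn_Ioi_rpow_of_lt (by linarith) hT0).const_mul _)
      have h := setIntegral_mono_on hFIntT hint2 measurableSet_Ioi hstep
      refine h.trans ?_
      rw [integral_const_mul, integral_Ioi_rpow_of_lt (by linarith) hT0]
      have hTk : T ^ (-γ + 1) = a ^ (-k) := by
        rw [hTdef, ← Real.rpow_mul ha0.le]
        congr 1
        rw [hkdef]; ring
      rw [hTk]
      apply le_of_eq
      have h1 : -γ + 1 ≠ 0 := by intro h; linarith
      have h2 : γ - 1 ≠ 0 := by intro h; linarith
      field_simp
      ring
    -- put things together
    have hsum : (∫ t in Ioi (1:ℝ), F t)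
        ≤ (D * 2 ^ (k/m) * M₁ + 2 ^ α * E + 2 ^ α / (γ - 1)) * a ^ (-k) := by
      rw [hsplit1, hsplit2]
      have := add_le_add hnear (add_le_add hmid htail)
      refine this.trans (le_of_eq ?_)
      ring
    have hexp_eq : ν / m * -k = -κ := by
      rw [hκdef, hkdef]
      field_simp
    have hak : a ^ (-k) = c ^ (-k) * r ^ (-κ) := by
      rw [hadef, Real.mul_rpow hc.le (Real.rpow_nonneg hr0.le _), ← Real.rpow_mul hr0.le,
        hexp_eq]
    have hrκ : r ^ (-κ) ≤ 2 ^ κ * (1 + r) ^ (-κ) := by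
      have h1 : (1 + r) / 2 ≤ r := by linarith
      have h2 : (0:ℝ) < (1 + r) / 2 := by linarith
      have h3 := Real.rpow_le_rpow_of_nonpos h2 h1 (neg_nonpos.2 hκ0.le)
      rw [Real.div_rpow (by linarith : (0:ℝ) ≤ 1 + r) (by norm_num : (0:ℝ) ≤ 2),
        Real.rpow_neg (by norm_num : (0:ℝ) ≤ 2), div_eq_mul_inv, inv_inv, mul_comm] at h3
      exact h3
    set S : ℝ := D * 2 ^ (k/m) * M₁ + 2 ^ α * E + 2 ^ α / (γ - 1) with hSdef
    have hS0 : (0:ℝ) < S := by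
      have h1 : (0:ℝ) < 2 ^ α * E := by positivity
      have h2 : (0:ℝ) < 2 ^ α / (γ - 1) := by positivity
      have h3 : (0:ℝ) ≤ D * 2 ^ (k/m) * M₁ := by positivity
      rw [hSdef]
      linarith
    have hck : (0:ℝ) < c ^ (-k) := Real.rpow_pos_of_pos hc _
    calc (∫ t in Ioi (1:ℝ), F t) ≤ S * a ^ (-k) := hsum
      _ = S * c ^ (-k) * r ^ (-κ) := by rw [hak]; ring
      _ ≤ S * c ^ (-k) * (2 ^ κ * (1 + r) ^ (-κ)) := by
          apply mul_le_mul_of_nonneg_left hrκ (by positivity)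
      _ = Cl * (1 + r) ^ (-κ) := by rw [hCldef, hSdef]; ring
      _ ≤ (Cl + Cs) * (1 + r) ^ (-κ) := by
          apply mul_le_mul_of_nonneg_right (by linarith) (Real.rpow_nonneg (by linarith) _)
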